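/- If a_{ij} > 0 for all 1 ≤ i,j ≤ m and c ∈ S^{m-1} satisfies c_i > 0 for all i, then every eigenvalue λ of B_c satisfies |λ| ≤ 1, the eigenvalue 1 of B_c is simple (algebraic multiplicity 1), and every eigenvalue λ ≠ 1 satisfies |λ| < 1. -/

import Mathlib

open Finset Matrix Polynomial

/-- The matrix `B_c` with `b_{ii} = 1 - ∑_{j≠i} a_{ij} c_j` and `b_{ik} = c_i a_{ik}` for `i ≠ k`. -/
noncomputable def Bmat {m : ℕ} (a : Fin m → Fin m → ℝ) (c : Fin m → ℝ) :
    Matrix (Fin m) (Fin m) ℝ :=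
  Matrix.of fun i k =>
    if i = k then 1 - ∑ j ∈ Finset.univ.erase i, a i j * c j else c i * a i k

lemma myCharpolyConj {n : Type*} [Fintype n] [DecidableEq n] {R : Type*} [CommRing R]
    (P Q M : Matrix n n R) (h1 : P * Q = 1) (h2 : Q * P = 1) :
    (Q * M * P).charpoly = M.charpoly := by
  have hC : ∀ (A B : Matrix n n R),
      (C : R →+* R[X]).mapMatrix (A * B) =
        (C : R →+* R[X]).mapMatrix A * (C : R →+* R[X]).mapMatrix B := fun A B => by
    simp [_root_.map_mul]
  have hc : charmatrix (Q * M * P) =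
      (C : R →+* R[X]).mapMatrix Q * charmatrix M * (C : R →+* R[X]).mapMatrix P := by
    unfold charmatrix
    rw [mul_sub, sub_mul]
    congr 1
    · rw [(Matrix.scalar_commute (X : R[X]) (fun r' => Commute.all _ _) _).symm.eq]
      rw [mul_assoc, ← hC, h2, _root_.map_one, mul_one]
    · rw [← hC, ← hC]
  have hdet : (charmatrix (Q * M * P)).det = (charmatrix M).det := by
    rw [hc, det_mul, det_mul]
    have : ((C : R →+* R[X]).mapMatrix Q).det * ((C : R →+* R[X]).mapMatrix P).det = 1 := by
      rw [← det_mul, ← hC, h2, _root_.map_one, det_one]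
    calc ((C : R →+* R[X]).mapMatrix Q).det * (charmatrix M).det *
          ((C : R →+* R[X]).mapMatrix P).det
        = (charmatrix M).det * (((C : R →+* R[X]).mapMatrix Q).det *
            ((C : R →+* R[X]).mapMatrix P).det) := by ring
      _ = (charmatrix M).det := by rw [this, mul_one]
  simpa [Matrix.charpoly] using hdet

lemma myEvalCharpoly {n : Type*} [Fintype n] [DecidableEq n] {R : Type*} [CommRing R]
    (M : Matrix n n R) (t : R) :
    M.charpoly.eval t = (Matrix.diagonal (fun _ => t) - M).det := by
  have : M.charpoly.eval t = (evalRingHom t) M.charpoly := rfl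
  rw [this, Matrix.charpoly, RingHom.map_det]
  congr 1
  ext i j
  by_cases h : i = j
  · subst h; simp [charmatrix_apply_eq, Matrix.diagonal]
  · simp [charmatrix_apply_ne _ _ _ h, Matrix.diagonal, h]

lemma myRootEigvec {n : Type*} [Fintype n] [DecidableEq n]
    (M : Matrix n n ℂ) (lam : ℂ) (h : M.charpoly.IsRoot lam) :
    ∃ v, v ≠ 0 ∧ M.mulVec v = lam • v := by
  have hdet : (Matrix.diagonal (fun _ => lam) - M).det = 0 := by
    rw [← myEvalCharpoly]; exact h
  obtain ⟨v, hv0, hv⟩ := (Matrix.exists_mulVec_eq_zero_iff).2 hdet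
  refine ⟨v, hv0, ?_⟩
  have h2 : (Matrix.diagonal (fun _ => lam)) *ᵥ v - M *ᵥ v = 0 := by
    rw [← Matrix.sub_mulVec]; exact hv
  have h3 := sub_eq_zero.mp h2
  calc M.mulVec v = (Matrix.diagonal (fun _ => lam)).mulVec v := h3.symm
    _ = lam • v := by ext i; simp [Matrix.mulVec_diagonal]

lemma myBound {n : Type*} [Fintype n] (S : Matrix n n ℝ)
    (hpos : ∀ i k, 0 ≤ S i k) (hrow : ∀ i, ∑ k, S i k = 1)
    (v : n → ℂ) (R : ℝ) (hv : ∀ k, ‖v k‖ ≤ R) (i : n) :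
    ‖((S.map (Complex.ofReal)).mulVec v) i‖ ≤ R := by
  have : ((S.map (Complex.ofReal)).mulVec v) i = ∑ k, (S i k : ℂ) * v k := by
    simp [Matrix.mulVec, dotProduct]
  rw [this]
  calc ‖∑ k, (S i k : ℂ) * v k‖ ≤ ∑ k, ‖(S i k : ℂ) * v k‖ :=
        norm_sum_le _ _
    _ = ∑ k, S i k * ‖v k‖ := by
        refine Finset.sum_congr rfl fun k _ => ?_
        rw [norm_mul, Complex.norm_of_nonneg (hpos i k)]
    _ ≤ ∑ k, S i k * R := by
        refine Finset.sum_le_sum fun k _ => ?_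
        exact mul_le_mul_of_nonneg_left (hv k) (hpos i k)
    _ = R := by rw [← Finset.sum_mul, hrow i, one_mul]

lemma mySpectral {n : Type*} [Fintype n] [DecidableEq n] [Nonempty n] (S : Matrix n n ℝ)
    (hpos : ∀ i k, 0 < S i k) (hrow : ∀ i, ∑ k, S i k = 1)
    (lam : ℂ) (v : n → ℂ) (hv : v ≠ 0)
    (heig : (S.map (Complex.ofReal)).mulVec v = lam • v) :
    ‖lam‖ ≤ 1 ∧ (‖lam‖ = 1 → lam = 1 ∧ ∀ k l, v k = v l) := by
  obtain ⟨i, -, hi⟩ := Finset.exists_max_image Finset.univ (fun k => ‖v k‖)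
    Finset.univ_nonempty
  have hi' : ∀ k, ‖v k‖ ≤ ‖v i‖ := fun k => hi k (Finset.mem_univ k)
  have hrpos : 0 < ‖v i‖ := by
    rcases (norm_nonneg (v i)).lt_or_eq with h | h
    · exact h
    · exfalso; apply hv; funext k
      show v k = 0
      exact norm_eq_zero.mp (le_antisymm (le_of_le_of_eq (hi' k) h.symm)
        (norm_nonneg _))
  set r := ‖v i‖ with hr
  have heq : ∑ k, (S i k : ℂ) * v k = lam * v i := by
    have := congrFun heig i
    simpa [Matrix.mulVec, dotProduct] using this
  have habs_le : ‖lam‖ * r ≤ r := by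
    calc ‖lam‖ * r = ‖lam * v i‖ := (norm_mul _ _).symm
      _ = ‖∑ k, (S i k : ℂ) * v k‖ := by rw [heq]
      _ ≤ r := myBound S (fun a b => (hpos a b).le) hrow v r hi' i
  have h1 : ‖lam‖ ≤ 1 := by
    by_contra h
    push_neg at h
    nlinarith
  refine ⟨h1, fun habs => ?_⟩
  have hau : ‖lam * v i‖ = r := by rw [norm_mul, habs, one_mul]
  have hukey : ∀ k, v k = lam * v i := by
    have hre_le : ∀ k, ((starRingEnd ℂ) (lam * v i) * v k).re ≤ r ^ 2 := by
      intro k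
      calc ((starRingEnd ℂ) (lam * v i) * v k).re
          ≤ ‖(starRingEnd ℂ) (lam * v i) * v k‖ := Complex.re_le_norm _
        _ = r * ‖v k‖ := by rw [norm_mul, Complex.norm_conj, hau]
        _ ≤ r * r := mul_le_mul_of_nonneg_left (hi' k) hrpos.le
        _ = r ^ 2 := (sq r).symm
    have hsum : ∑ k, S i k * ((starRingEnd ℂ) (lam * v i) * v k).re = r ^ 2 := by
      have key : ((starRingEnd ℂ) (lam * v i) * ∑ k, (S i k : ℂ) * v k).re = r ^ 2 := by
        rw [heq, mul_comm, Complex.mul_conj, ← Complex.sq_norm, hau, Complex.ofReal_re]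
      rw [← key, Finset.mul_sum, Complex.re_sum]
      refine Finset.sum_congr rfl fun k _ => ?_
      rw [show (starRingEnd ℂ) (lam * v i) * ((S i k : ℂ) * v k)
            = (S i k : ℂ) * ((starRingEnd ℂ) (lam * v i) * v k) by ring]
      exact (Complex.re_ofReal_mul _ _).symm
    have hterms : ∀ k ∈ Finset.univ,
        0 ≤ S i k * (r ^ 2 - ((starRingEnd ℂ) (lam * v i) * v k).re) := by
      intro k _
      exact mul_nonneg (hpos i k).le (by linarith [hre_le k])
    have hsum0 : ∑ k, S i k * (r ^ 2 - ((starRingEnd ℂ) (lam * v i) * v k).re) = 0 := by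
      simp only [mul_sub]
      rw [Finset.sum_sub_distrib, hsum, ← Finset.sum_mul, hrow i, one_mul, sub_self]
    have hzero := (Finset.sum_eq_zero_iff_of_nonneg hterms).mp hsum0
    intro k
    have hre : ((starRingEnd ℂ) (lam * v i) * v k).re = r ^ 2 := by
      have := hzero k (Finset.mem_univ k)
      rcases mul_eq_zero.mp this with h | h
      · exact absurd h (hpos i k).ne'
      · linarith [sub_eq_zero.mp h]
    have haz : ‖(starRingEnd ℂ) (lam * v i) * v k‖ ≤ r ^ 2 := by
      rw [norm_mul, Complex.norm_conj, hau, sq]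
      exact mul_le_mul_of_nonneg_left (hi' k) hrpos.le
    have him : ((starRingEnd ℂ) (lam * v i) * v k).im = 0 := by
      by_contra h
      have h2 := Complex.sq_norm ((starRingEnd ℂ) (lam * v i) * v k)
      rw [Complex.normSq_apply, hre] at h2
      nlinarith [pow_two_pos_of_ne_zero h, norm_nonneg ((starRingEnd ℂ) (lam * v i) * v k)]
    have hz : (starRingEnd ℂ) (lam * v i) * v k = ((r ^ 2 : ℝ) : ℂ) := by
      apply Complex.ext
      · rw [Complex.ofReal_re]; exact hre
      · rw [Complex.ofReal_im]; exact him
    have hz2 : (starRingEnd ℂ) (lam * v i) * (lam * v i) = ((r ^ 2 : ℝ) : ℂ) := by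
      rw [mul_comm, Complex.mul_conj, ← Complex.sq_norm, hau]
    have hune : (starRingEnd ℂ) (lam * v i) ≠ 0 := by
      simp only [ne_eq, _root_.map_eq_zero]
      intro h0; rw [h0, norm_zero] at hau; exact hrpos.ne' hau.symm
    exact mul_left_cancel₀ hune (hz.trans hz2.symm)
  have hvine : v i ≠ 0 := fun h0 => by
    rw [hr, h0] at hrpos; simp at hrpos
  have hlam : lam = 1 := by
    have h2 : v i = lam * v i := hukey i
    have h3 : (1 - lam) * v i = 0 := by linear_combination h2
    rcases mul_eq_zero.mp h3 with h | h
    · have := sub_eq_zero.mp h; exact this.symm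
    · exact absurd h hvine
  exact ⟨hlam, fun k l => (hukey k).trans (hukey l).symm⟩

/-- The nilpotent part of the basis-change matrix. -/
def myK (n : ℕ) : Matrix (Fin (n+1)) (Fin (n+1)) ℂ :=
  Matrix.of fun i j => if j = 0 ∧ i ≠ 0 then 1 else 0

lemma myK_mulVec (n : ℕ) (y : Fin (n+1) → ℂ) :
    (myK n).mulVec y = fun i => if i = 0 then 0 else y 0 := by
  funext i
  simp only [Matrix.mulVec, dotProduct, myK, Matrix.of_apply]
  by_cases hi : i = 0
  · simp [hi]
  · simp only [hi, if_false, hi, ne_eq, not_false_eq_true, and_true]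
    rw [Finset.sum_congr rfl (fun k _ => show (if k = 0 then (1:ℂ) else 0) * y k
      = if k = 0 then y k else 0 by split_ifs <;> simp)]
    rw [Finset.sum_ite_eq' Finset.univ 0 y]
    simp

lemma myK_mul_myK (n : ℕ) : myK n * myK n = 0 := by
  ext i j
  simp only [Matrix.mul_apply, myK, Matrix.of_apply, Matrix.zero_apply]
  apply Finset.sum_eq_zero
  intro k _
  by_cases hk : k = 0 <;> simp [hk]

lemma myColExtract {n : ℕ} (A : Matrix (Fin (n+1)) (Fin (n+1)) ℂ) (i : Fin (n+1)) :
    (A.mulVec (fun k => if k = 0 then 1 else 0)) i = A i 0 := by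
  simp only [Matrix.mulVec, dotProduct]
  rw [Finset.sum_congr rfl (fun k _ => show A i k * (if k = 0 then (1:ℂ) else 0)
    = if k = 0 then A i k else 0 by split_ifs <;> simp)]
  rw [Finset.sum_ite_eq' Finset.univ 0 (fun k => A i k)]
  simp

lemma myPQ (n : ℕ) : (1 + myK n) * (1 - myK n) = 1 := by
  have h := myK_mul_myK n
  rw [mul_sub, add_mul, add_mul, one_mul, mul_one, h]
  noncomm_ring

lemma myQP (n : ℕ) : (1 - myK n) * (1 + myK n) = 1 := by
  have h := myK_mul_myK n
  rw [sub_mul, mul_add, mul_add, one_mul, mul_one, h]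
  noncomm_ring

/-- Reindexing equivalence `Fin 1 ⊕ Fin n ≃ Fin (n+1)`. -/
def myE (n : ℕ) : Fin 1 ⊕ Fin n ≃ Fin (n + 1) where
  toFun := Sum.elim (fun _ => 0) Fin.succ
  invFun := fun i => Fin.cases (Sum.inl 0) Sum.inr i
  left_inv := by
    rintro (x | j)
    · simp [Subsingleton.elim x 0]
    · simp
  right_inv := by
    intro i
    induction i using Fin.cases <;> simp

/-- Eigenvalues over `ℂ` of `B_c` (the roots of its characteristic polynomial) all lie in
the closed unit disc, the eigenvalue `1` is simple, and every other eigenvalue has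
absolute value `< 1`. -/
theorem stmt_8 {m : ℕ} (hm : 2 ≤ m) (a : Fin m → Fin m → ℝ)
    (ha : ∀ i j, a i j ∈ Set.Icc (0 : ℝ) 1) (hapos : ∀ i j, 0 < a i j)
    (c : Fin m → ℝ) (hc : c ∈ stdSimplex ℝ (Fin m)) (hcpos : ∀ i, 0 < c i) :
    (∀ lam : ℂ, (((Bmat a c).map Complex.ofReal).charpoly).IsRoot lam →
      ‖lam‖ ≤ 1) ∧
    (((Bmat a c).map Complex.ofReal).charpoly).rootMultiplicity 1 = 1 ∧
    (∀ lam : ℂ, (((Bmat a c).map Complex.ofReal).charpoly).IsRoot lam → lam ≠ 1 →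
      ‖lam‖ < 1) := by
  obtain ⟨n, rfl⟩ : ∃ n, m = n + 1 := ⟨m - 1, by omega⟩
  have hcsum : ∑ i, c i = 1 := hc.2
  -- the row-stochastic conjugate matrix
  set M : Matrix (Fin (n+1)) (Fin (n+1)) ℝ := Matrix.of fun i k =>
    if i = k then 1 - ∑ j ∈ Finset.univ.erase i, a i j * c j else a i k * c k with hM
  have hMpos : ∀ i k, 0 < M i k := by
    intro i k
    by_cases h : i = k
    · subst h
      have hle : ∑ j ∈ Finset.univ.erase i, a i j * c j ≤ ∑ j ∈ Finset.univ.erase i, c j := by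
        refine Finset.sum_le_sum fun j _ => ?_
        exact mul_le_of_le_one_left (hcpos j).le (ha i j).2
      have herase : ∑ j ∈ Finset.univ.erase i, c j = 1 - c i := by
        have := Finset.add_sum_erase Finset.univ c (Finset.mem_univ i)
        linarith [hcsum, this]
      have hMii : M i i = 1 - ∑ j ∈ Finset.univ.erase i, a i j * c j := by simp [hM]
      rw [hMii]
      have := hcpos i
      linarith
    · simp only [hM, Matrix.of_apply, if_neg h]
      exact mul_pos (hapos i k) (hcpos k)
  have hMrow : ∀ i, ∑ k, M i k = 1 := by
    intro i
    rw [← Finset.add_sum_erase Finset.univ (fun k => M i k) (Finset.mem_univ i)]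
    have h1 : M i i = 1 - ∑ j ∈ Finset.univ.erase i, a i j * c j := by
      simp [hM]
    have h2 : ∑ k ∈ Finset.univ.erase i, M i k = ∑ k ∈ Finset.univ.erase i, a i k * c k := by
      refine Finset.sum_congr rfl fun k hk => ?_
      have : i ≠ k := fun h => (Finset.ne_of_mem_erase hk) h.symm
      simp [hM, this]
    rw [h1, h2]
    ring
  -- Bmat is conjugate to M
  have hBconj : Bmat a c = Matrix.diagonal c * M * Matrix.diagonal (fun i => (c i)⁻¹) := by
    ext i k
    rw [Matrix.mul_diagonal, Matrix.diagonal_mul]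
    by_cases h : i = k
    · subst h
      have hMii : M i i = 1 - ∑ j ∈ Finset.univ.erase i, a i j * c j := by simp [hM]
      have hBii : Bmat a c i i = 1 - ∑ j ∈ Finset.univ.erase i, a i j * c j := by simp [Bmat]
      rw [hMii, hBii]
      have : c i ≠ 0 := (hcpos i).ne'
      field_simp
    · have hMik : M i k = a i k * c k := by simp [hM, h]
      have hBik : Bmat a c i k = c i * a i k := by simp [Bmat, h]
      rw [hMik, hBik]
      have : c k ≠ 0 := (hcpos k).ne'
      field_simp
  -- charpoly equality
  have hDE : Matrix.diagonal c * Matrix.diagonal (fun i => (c i)⁻¹) = 1 := by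
    rw [Matrix.diagonal_mul_diagonal]
    have h' : (fun i => c i * (c i)⁻¹) = fun _ : Fin (n+1) => (1:ℝ) := by
      funext i; exact mul_inv_cancel₀ (hcpos i).ne'
    rw [h', Matrix.diagonal_one]
  have hED : Matrix.diagonal (fun i => (c i)⁻¹) * Matrix.diagonal c = 1 := by
    rw [Matrix.diagonal_mul_diagonal]
    have h' : (fun i => (c i)⁻¹ * c i) = fun _ : Fin (n+1) => (1:ℝ) := by
      funext i; exact inv_mul_cancel₀ (hcpos i).ne'
    rw [h', Matrix.diagonal_one]
  have hcharB : (Bmat a c).charpoly = M.charpoly := by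
    rw [hBconj]
    exact myCharpolyConj (Matrix.diagonal (fun i => (c i)⁻¹)) (Matrix.diagonal c) M hED hDE
  set N : Matrix (Fin (n+1)) (Fin (n+1)) ℂ := M.map Complex.ofReal with hN
  have hmap : ((Bmat a c).map Complex.ofReal).charpoly = N.charpoly := by
    have h1 : (Bmat a c).map Complex.ofReal = (Bmat a c).map (Complex.ofRealHom : ℝ →+* ℂ) := rfl
    have h2 : N = M.map (Complex.ofRealHom : ℝ →+* ℂ) := rfl
    rw [h1, h2, Matrix.charpoly_map, Matrix.charpoly_map, hcharB]
  have inst : Nonempty (Fin (n+1)) := ⟨0⟩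
  -- Part 1 and 3 via the spectral lemma
  have hpart1 : ∀ lam : ℂ, (((Bmat a c).map Complex.ofReal).charpoly).IsRoot lam →
      ‖lam‖ ≤ 1 := by
    intro lam hroot
    rw [hmap] at hroot
    obtain ⟨v, hv0, hv⟩ := myRootEigvec N lam hroot
    exact (mySpectral M hMpos hMrow lam v hv0 hv).1
  have hpart3 : ∀ lam : ℂ, (((Bmat a c).map Complex.ofReal).charpoly).IsRoot lam → lam ≠ 1 →
      ‖lam‖ < 1 := by
    intro lam hroot hne
    rw [hmap] at hroot
    obtain ⟨v, hv0, hv⟩ := myRootEigvec N lam hroot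
    obtain ⟨hle, heq⟩ := mySpectral M hMpos hMrow lam v hv0 hv
    rcases lt_or_eq_of_le hle with h | h
    · exact h
    · exact absurd (heq h).1 hne
  refine ⟨hpart1, ?_, hpart3⟩
  -- Part 2: the eigenvalue 1 is simple
  set P : Matrix (Fin (n+1)) (Fin (n+1)) ℂ := 1 + myK n with hP
  set Q : Matrix (Fin (n+1)) (Fin (n+1)) ℂ := 1 - myK n with hQ
  set A : Matrix (Fin (n+1)) (Fin (n+1)) ℂ := Q * N * P with hA
  have hcharA : A.charpoly = N.charpoly := myCharpolyConj P Q N (myPQ n) (myQP n)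
  -- the all-ones vector is fixed by N
  have hNones : N.mulVec (fun _ => 1) = fun _ => 1 := by
    funext i
    simp only [hN, Matrix.mulVec, dotProduct, Matrix.map_apply, mul_one]
    rw [show ∑ k, ((M i k : ℂ)) = ((∑ k, M i k : ℝ) : ℂ) by push_cast; ring]
    rw [hMrow i]
    norm_num
  -- vector transport lemmas
  have hPvec : ∀ y : Fin (n+1) → ℂ, P.mulVec y = y + fun i => if i = 0 then 0 else y 0 := by
    intro y
    rw [hP, Matrix.add_mulVec, Matrix.one_mulVec, myK_mulVec]
  have hQvec : ∀ y : Fin (n+1) → ℂ, Q.mulVec y = y - fun i => if i = 0 then 0 else y 0 := by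
    intro y
    rw [hQ, Matrix.sub_mulVec, Matrix.one_mulVec, myK_mulVec]
  have hPe0 : P.mulVec (fun k => if k = 0 then 1 else 0) = fun _ => 1 := by
    rw [hPvec]
    funext i
    by_cases h : i = 0 <;> simp [h]
  have hQones : Q.mulVec (fun _ => 1) = fun k => if k = 0 then 1 else 0 := by
    rw [hQvec]
    funext i
    by_cases h : i = 0 <;> simp [h]
  have hAcol : ∀ i, A i 0 = if i = 0 then 1 else 0 := by
    intro i
    have h1 : A.mulVec (fun k => if k = 0 then 1 else 0) = fun k => if k = 0 then 1 else 0 := by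
      rw [hA, ← Matrix.mulVec_mulVec, ← Matrix.mulVec_mulVec, hPe0, hNones, hQones]
    have h2 := myColExtract A i
    rw [h1] at h2
    exact h2.symm
  -- block decomposition
  set A22 : Matrix (Fin n) (Fin n) ℂ := Matrix.of (fun i j => A i.succ j.succ) with hA22
  have hsub : A.submatrix (myE n) (myE n) =
      Matrix.fromBlocks (Matrix.of fun _ _ => 1) (Matrix.of fun _ j => A 0 j.succ) 0 A22 := by
    ext i j
    rcases i with i | i <;> rcases j with j | j
    · simp only [Matrix.submatrix_apply, Matrix.fromBlocks_apply₁₁, Matrix.of_apply, myE,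
        Equiv.coe_fn_mk, Sum.elim_inl]
      rw [hAcol 0]
      simp
    · simp [myE, Matrix.fromBlocks]
    · simp only [Matrix.submatrix_apply, Matrix.fromBlocks_apply₂₁, Matrix.of_apply, myE,
        Equiv.coe_fn_mk, Sum.elim_inr, Sum.elim_inl, Matrix.zero_apply]
      rw [hAcol i.succ]
      simp [Fin.succ_ne_zero]
    · simp [myE, Matrix.fromBlocks, hA22]
  have hfact : N.charpoly = (X - C 1) * A22.charpoly := by
    have h1 : (A.submatrix (myE n) (myE n)).charpoly = A.charpoly := by
      have := Matrix.charpoly_reindex (myE n).symm A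
      rw [Matrix.reindex_apply, Equiv.symm_symm] at this
      exact this
    have h2 : (Matrix.of fun (_ _ : Fin 1) => (1:ℂ)).charpoly = X - C 1 := by
      rw [Matrix.charpoly, Matrix.det_fin_one, charmatrix_apply_eq]
      simp
    rw [← hcharA, ← h1, hsub, Matrix.charpoly_fromBlocks_zero₂₁, h2]
  -- the quotient charpoly does not vanish at 1
  have hq1 : ¬ A22.charpoly.IsRoot 1 := by
    intro heval
    obtain ⟨w, hw0, hw⟩ := myRootEigvec A22 1 heval
    rw [one_smul] at hw
    set y : Fin (n+1) → ℂ := fun i => Fin.cases 0 w i with hy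
    have hy0 : y 0 = 0 := by simp [hy]
    have hysucc : ∀ j : Fin n, y j.succ = w j := by intro j; simp [hy]
    set t : ℂ := (A.mulVec y) 0 with ht
    have hAy : A.mulVec y = y + t • (fun k : Fin (n+1) => if k = 0 then (1:ℂ) else 0) := by
      funext i
      induction i using Fin.cases with
      | zero => simp [hy0, ht]
      | succ j =>
        have hlhs : (A.mulVec y) j.succ = (A22.mulVec w) j := by
          simp only [Matrix.mulVec, dotProduct]
          rw [Fin.sum_univ_succ]
          rw [hy0, mul_zero, zero_add]
          refine Finset.sum_congr rfl fun k _ => ?_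
          rw [hysucc k, hA22]
          simp
        rw [hlhs, hw]
        simp [hysucc j, Fin.succ_ne_zero]
    set x : Fin (n+1) → ℂ := P.mulVec y with hx
    have hx0 : x 0 = 0 := by
      rw [hx, hPvec]
      simp [hy0]
    have hxne : x ≠ 0 := by
      intro h0
      have hyz : y = 0 := by
        have : Q.mulVec x = y := by
          rw [hx, Matrix.mulVec_mulVec, myQP n, Matrix.one_mulVec]
        rw [h0, Matrix.mulVec_zero] at this
        exact this.symm
      apply hw0
      funext j
      have := congrFun hyz j.succ
      rw [hysucc j] at this
      exact this
    have hNx : N.mulVec x = x + t • (fun _ : Fin (n+1) => (1:ℂ)) := by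
      have hNP : N * P = P * A := by
        rw [hA]
        calc N * P = (P * Q) * (N * P) := by rw [myPQ n, one_mul]
          _ = P * (Q * N * P) := by noncomm_ring
      calc N.mulVec x = (N * P).mulVec y := by rw [hx, Matrix.mulVec_mulVec]
        _ = P.mulVec (A.mulVec y) := by rw [hNP, ← Matrix.mulVec_mulVec]
        _ = P.mulVec y + t • P.mulVec (fun k => if k = 0 then 1 else 0) := by
            rw [hAy, Matrix.mulVec_add, Matrix.mulVec_smul]
        _ = x + t • (fun _ : Fin (n+1) => (1:ℂ)) := by rw [← hx, hPe0]
    by_cases hT : t = 0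
    · -- x is a fixed vector, hence constant, hence zero
      rw [hT, zero_smul, add_zero] at hNx
      have heig : N.mulVec x = (1:ℂ) • x := by rw [one_smul]; exact hNx
      obtain ⟨-, hconst⟩ := mySpectral M hMpos hMrow 1 x hxne heig
      have hcc := hconst (by simp)
      apply hxne
      funext k
      have := hcc.2 k 0
      rw [hx0] at this
      exact this
    · -- iterate: N^j x = x + j t 1, contradiction with boundedness
      set R : ℝ := ∑ k, ‖x k‖ with hR
      have hbR : ∀ k, ‖x k‖ ≤ R := by
        intro k
        exact Finset.single_le_sum (fun j _ => norm_nonneg (x j)) (Finset.mem_univ k)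
      have hiter : ∀ (j : ℕ) (k : Fin (n+1)), ‖x k + j * t‖ ≤ R := by
        intro j
        induction j with
        | zero => intro k; simpa using hbR k
        | succ j ih =>
          intro k
          have hvec : (fun k => x k + (j:ℂ) * t) = x + ((j:ℂ) * t) • (fun _ : Fin (n+1) => (1:ℂ)) := by
            funext l; simp
          have happ : N.mulVec (fun k => x k + (j:ℂ) * t) = fun k => x k + ((j:ℕ)+1:ℂ) * t := by
            rw [hvec, Matrix.mulVec_add, Matrix.mulVec_smul, hNones, hNx]
            funext l
            simp
            ring
          have hb := myBound M (fun p q => (hMpos p q).le) hMrow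
            (fun k => x k + (j:ℂ) * t) R (fun k => ih k) k
          rw [happ] at hb
          convert hb using 3
          push_cast
          ring
      obtain ⟨j, hj⟩ := exists_nat_gt (R / ‖t‖)
      have habs := hiter j 0
      rw [hx0, zero_add, norm_mul, Complex.norm_natCast] at habs
      have htpos : 0 < ‖t‖ := norm_pos_iff.mpr hT
      rw [div_lt_iff₀ htpos] at hj
      linarith
  -- conclude
  rw [hmap, hfact]
  have hne : (X - C 1) * A22.charpoly ≠ 0 := by
    rw [← hfact]
    exact (Matrix.charpoly_monic N).ne_zero
  rw [Polynomial.rootMultiplicity_mul hne, Polynomial.rootMultiplicity_X_sub_C_self,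
    Polynomial.rootMultiplicity_eq_zero hq1]
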